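/- For a tessarine C = a + bî + cĵ + dk̂, the matrix exponential of its matrix representation equals exp(a+bi)·[cosh(c+di)·I₂ + sinh(c+di)·J₂]; consequently Re(exp C) = exp(a)·[cos(b)cos(d)cosh(c) − sin(b)sin(d)sinh(c)]. -/

import Mathlib

open NormedSpace

/-- The tessarine `a + b î + c ĵ + d k̂` as the 2×2 complex matrix
`(a + b i) I₂ + (c + d i) J₂` with `J₂ = [[0,1],[1,0]]`. -/
noncomputable def tess (a b c d : ℝ) : Matrix (Fin 2) (Fin 2) ℂ :=
  ((a : ℂ) + b * Complex.I) • (1 : Matrix (Fin 2) (Fin 2) ℂ)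
    + ((c : ℂ) + d * Complex.I) • !![0, 1; 1, 0]

/-- The real part of a tessarine: the real part of the diagonal entry of its matrix
representation. -/
noncomputable def tessRe (M : Matrix (Fin 2) (Fin 2) ℂ) : ℝ := (M 0 0).re

noncomputable def Umat : Matrix (Fin 2) (Fin 2) ℂ := !![1, 1; 1, -1]
noncomputable def Vmat : Matrix (Fin 2) (Fin 2) ℂ := !![1/2, 1/2; 1/2, -1/2]

lemma UV : Umat * Vmat = 1 := by
  ext i j; fin_cases i <;> fin_cases j <;>
    simp [Umat, Vmat, Matrix.mul_apply, Matrix.vecMul, dotProduct, Fin.sum_univ_two,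
      Matrix.one_apply] <;> norm_num

lemma VU : Vmat * Umat = 1 := by
  ext i j; fin_cases i <;> fin_cases j <;>
    simp [Umat, Vmat, Matrix.mul_apply, Matrix.vecMul, dotProduct, Fin.sum_univ_two,
      Matrix.one_apply] <;> norm_num

noncomputable def Uunit : (Matrix (Fin 2) (Fin 2) ℂ)ˣ := ⟨Umat, Vmat, UV, VU⟩

lemma conj_tess (z w : ℂ) :
    Umat * (z • (1 : Matrix (Fin 2) (Fin 2) ℂ) + w • !![0, 1; 1, 0]) * Vmat
      = Matrix.diagonal ![z + w, z - w] := by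
  ext i j; fin_cases i <;> fin_cases j <;>
    simp [Umat, Vmat, Matrix.mul_apply, Matrix.vecMul, dotProduct, Fin.sum_univ_two,
      Matrix.one_apply, Matrix.add_apply, Matrix.smul_apply, Matrix.diagonal_apply] <;> ring

lemma exp_zw (z w : ℂ) :
    exp (z • (1 : Matrix (Fin 2) (Fin 2) ℂ) + w • !![0, 1; 1, 0])
      = Vmat * Matrix.diagonal ![Complex.exp (z + w), Complex.exp (z - w)] * Umat := by
  set T := z • (1 : Matrix (Fin 2) (Fin 2) ℂ) + w • !![0, 1; 1, 0] with hT
  have h : T = Vmat * (Umat * T * Vmat) * Umat := by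
    rw [← Matrix.mul_assoc, ← Matrix.mul_assoc, VU, Matrix.one_mul, Matrix.mul_assoc, VU,
      Matrix.mul_one]
  rw [h, conj_tess]
  have hV : (Vmat : Matrix (Fin 2) (Fin 2) ℂ) = ((Uunit⁻¹ : _ˣ) : Matrix (Fin 2) (Fin 2) ℂ) := rfl
  have hU : (Umat : Matrix (Fin 2) (Fin 2) ℂ) = ((Uunit : _ˣ) : Matrix (Fin 2) (Fin 2) ℂ) := rfl
  rw [hV, hU, Matrix.exp_units_conj', Matrix.exp_diagonal]
  have : exp (![z + w, z - w]) = ![Complex.exp (z + w), Complex.exp (z - w)] := by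
    funext i; fin_cases i <;> simp [Pi.exp_def, Complex.exp_eq_exp_ℂ]
  rw [this]

lemma key (z w : ℂ) :
    exp (z • (1 : Matrix (Fin 2) (Fin 2) ℂ) + w • !![0, 1; 1, 0])
      = Complex.exp z • (Complex.cosh w • (1 : Matrix (Fin 2) (Fin 2) ℂ)
          + Complex.sinh w • !![0, 1; 1, 0]) := by
  rw [exp_zw]
  ext i j
  fin_cases i <;> fin_cases j <;>
    · simp [Umat, Vmat, Matrix.mul_apply, Matrix.vecMul, dotProduct, Fin.sum_univ_two,
        Matrix.one_apply, Matrix.add_apply, Matrix.smul_apply, Matrix.diagonal_apply,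
        Complex.cosh, Complex.sinh, Complex.exp_add, Complex.exp_sub, Complex.exp_neg]
      field_simp [Complex.exp_ne_zero] <;> ring

/-- The matrix exponential of the tessarine `C = a + b î + c ĵ + d k̂` equals
`exp(a + bi) (cosh(c + di) I₂ + sinh(c + di) J₂)`; consequently
`Re(exp C) = exp(a) (cos b cos d cosh c - sin b sin d sinh c)`. -/
theorem tessarine_exp (a b c d : ℝ) :
    exp (tess a b c d)
        = Complex.exp ((a : ℂ) + b * Complex.I) •
            (Complex.cosh ((c : ℂ) + d * Complex.I) • (1 : Matrix (Fin 2) (Fin 2) ℂ)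
              + Complex.sinh ((c : ℂ) + d * Complex.I) • !![0, 1; 1, 0])
      ∧ tessRe (exp (tess a b c d))
        = Real.exp a *
            (Real.cos b * Real.cos d * Real.cosh c
              - Real.sin b * Real.sin d * Real.sinh c) := by
  have h1 := key ((a : ℂ) + b * Complex.I) ((c : ℂ) + d * Complex.I)
  rw [show tess a b c d = ((a : ℂ) + b * Complex.I) • (1 : Matrix (Fin 2) (Fin 2) ℂ)
      + ((c : ℂ) + d * Complex.I) • !![0, 1; 1, 0] from rfl]
  refine ⟨h1, ?_⟩
  set z : ℂ := (a : ℂ) + b * Complex.I with hz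
  set w : ℂ := (c : ℂ) + d * Complex.I with hw
  have h2 : (exp (z • (1 : Matrix (Fin 2) (Fin 2) ℂ) + w • !![0, 1; 1, 0])
        : Matrix (Fin 2) (Fin 2) ℂ) 0 0
      = Complex.exp z * Complex.cosh w := by
    rw [h1]; simp
  rw [tessRe, h2]
  have hcosh : Complex.cosh w = (Complex.exp w + Complex.exp (-w)) / 2 := rfl
  rw [hcosh]
  have h3 : ∀ u v : ℂ, Complex.exp u * ((Complex.exp v + Complex.exp (-v)) / 2)
      = (Complex.exp (u + v) + Complex.exp (u - v)) / 2 := by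
    intro u v
    rw [Complex.exp_add, Complex.exp_sub, Complex.exp_neg]
    field_simp [Complex.exp_ne_zero]
  rw [h3]
  have hre : ∀ x y : ℝ, (Complex.exp ((x:ℂ) + y * Complex.I)).re = Real.exp x * Real.cos y := by
    intro x y
    rw [Complex.exp_re]
    congr 2 <;> simp
  have hzw : z + w = ((a+c : ℝ):ℂ) + ((b+d : ℝ)) * Complex.I := by push_cast [hz, hw]; ring
  have hzw' : z - w = ((a-c : ℝ):ℂ) + ((b-d : ℝ)) * Complex.I := by push_cast [hz, hw]; ring
  rw [hzw, hzw']
  simp only [Complex.div_re, Complex.add_re, hre]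
  rw [show ((2:ℂ).normSq) = 4 by norm_num [Complex.normSq], show ((2:ℂ).re) = 2 by norm_num,
    show ((2:ℂ).im) = 0 by norm_num]
  simp [Real.cos_add, Real.cos_sub, Real.exp_add, Real.exp_sub, Real.exp_neg, Real.cosh_eq,
    Real.sinh_eq]
  field_simp
  ring
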